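/- Let φ be a 2-CNF formula (conjunction of clauses with at most two literals each). If a and b are two satisfying assignments lying in the same connected component of the solution graph G(φ), then the shortest-path distance between a and b in G(φ) equals their Hamming distance; that is, no distance expands. -/

import Mathlib

def SatClause {n : ℕ} (a : Fin n → Bool) (c : List (Fin n × Bool)) : Prop :=
  ∃ l ∈ c, (if l.2 then a l.1 else !(a l.1)) = true

/-- `Steps S k a b`: there is a walk of length `k` from `a` to `b` inside `S`,
each step changing exactly one coordinate. -/
inductive Steps {n : ℕ} (S : Set (Fin n → Bool)) : ℕ → (Fin n → Bool) → (Fin n → Bool) → Prop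
  | refl (a : Fin n → Bool) (h : a ∈ S) : Steps S 0 a a
  | tail {k : ℕ} {a b c : Fin n → Bool} :
      Steps S k a b → c ∈ S → hammingDist b c = 1 → Steps S (k + 1) a c

namespace TwoCnfAux

variable {n : ℕ}

/-- lax walks: steps of Hamming distance ≤ 1 (possibly trivial), head-oriented. -/
inductive Lax (S : Set (Fin n → Bool)) : ℕ → (Fin n → Bool) → (Fin n → Bool) → Prop
  | refl (a : Fin n → Bool) (h : a ∈ S) : Lax S 0 a a
  | head {k : ℕ} {a b c : Fin n → Bool} :
      a ∈ S → hammingDist a b ≤ 1 → Lax S k b c → Lax S (k + 1) a c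

lemma Lax.end_mem {S : Set (Fin n → Bool)} {k a b} (h : Lax S k a b) : b ∈ S := by
  induction h with
  | refl _ h => exact h
  | head _ _ _ ih => exact ih

lemma Lax.tail {S : Set (Fin n → Bool)} {k a b} (h : Lax S k a b) :
    ∀ c, c ∈ S → hammingDist b c ≤ 1 → Lax S (k + 1) a c := by
  induction h with
  | refl a h => exact fun c hc hd => Lax.head h hd (Lax.refl c hc)
  | head ha hab _ ih => exact fun c hc hd => Lax.head ha hab (ih c hc hd)

lemma steps_to_lax {S : Set (Fin n → Bool)} {k a b} (h : Steps S k a b) : Lax S k a b := by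
  induction h with
  | refl a h => exact Lax.refl a h
  | tail _ hc hd ih => exact ih.tail _ hc hd.le

lemma steps_head {S : Set (Fin n → Bool)} {k b c} (h : Steps S k b c) :
    ∀ a, a ∈ S → hammingDist a b = 1 → Steps S (k + 1) a c := by
  induction h with
  | refl b hb => exact fun a ha hd => Steps.tail (Steps.refl a ha) hb hd
  | tail _ hc hd' ih => exact fun a ha hd => Steps.tail (ih a ha hd) hc hd'

lemma steps_le {S : Set (Fin n → Bool)} {k a b} (h : Steps S k a b) : hammingDist a b ≤ k := by
  induction h with
  | refl a _ => simp
  | tail _ _ hd ih =>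
      calc hammingDist _ _ ≤ _ + _ := hammingDist_triangle _ _ _
      _ ≤ _ + 1 := by rw [hd]; exact Nat.add_le_add_right ih 1

/-- restricted median: agrees with `a` where `a = b`, with `x` elsewhere. -/
def med (a b x : Fin n → Bool) : Fin n → Bool := fun i => if a i = b i then a i else x i

lemma med_right (a b : Fin n → Bool) : med a b b = b := by
  funext i; unfold med; split
  · assumption
  · rfl

lemma dist_med_le (a b x y : Fin n → Bool) :
    hammingDist (med a b x) (med a b y) ≤ hammingDist x y := by
  apply Finset.card_le_card
  intro i hi
  simp only [Finset.mem_filter, Finset.mem_univ, true_and, med] at hi ⊢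
  intro hxy
  apply (Finset.mem_filter.mp hi).2
  split <;> simp [hxy]

lemma litSat_iff (v : Fin n → Bool) (l : Fin n × Bool) :
    ((if l.2 then v l.1 else !(v l.1)) = true) ↔ v l.1 = l.2 := by
  cases h : l.2 <;> simp

lemma sat_pair_iff (v : Fin n → Bool) (l₁ l₂ : Fin n × Bool) :
    SatClause v [l₁, l₂] ↔ v l₁.1 = l₁.2 ∨ v l₂.1 = l₂.2 := by
  simp only [SatClause, List.mem_cons, List.not_mem_nil, or_false, exists_eq_or_imp,
    exists_eq_left, litSat_iff]

lemma sat_single_iff (v : Fin n → Bool) (l : Fin n × Bool) :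
    SatClause v [l] ↔ v l.1 = l.2 := by
  simp only [SatClause, List.mem_cons, List.not_mem_nil, or_false, exists_eq_left, litSat_iff]

/-- median closure for clauses of length ≤ 2 -/
lemma med_sat {a b x : Fin n → Bool} {c : List (Fin n × Bool)} (hlen : c.length ≤ 2)
    (ha : SatClause a c) (hb : SatClause b c) (hx : SatClause x c) :
    SatClause (med a b x) c := by
  match c, hlen with
  | [], _ => rcases ha with ⟨l, hl, _⟩; simp at hl
  | [l], _ =>
      rw [sat_single_iff] at ha hb hx ⊢
      unfold med
      split <;> simp [ha, hx]
  | [l₁, l₂], _ =>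
      rw [sat_pair_iff] at ha hb hx ⊢
      have key : ∀ l : Fin n × Bool,
          (a l.1 = l.2 ∧ b l.1 = l.2) ∨ (a l.1 = l.2 ∧ x l.1 = l.2) ∨
          (b l.1 = l.2 ∧ x l.1 = l.2) → med a b x l.1 = l.2 := by
        intro l h
        unfold med
        rcases h with ⟨h1, h2⟩ | ⟨h1, h2⟩ | ⟨h1, h2⟩
        · rw [if_pos (h1.trans h2.symm)]; exact h1
        · split
          · exact h1
          · exact h2
        · split
          · next heq => rw [heq]; exact h1
          · exact h2
      rcases ha with ha | ha <;> rcases hb with hb | hb <;> rcases hx with hx | hx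
      · exact Or.inl (key l₁ (Or.inl ⟨ha, hb⟩))
      · exact Or.inl (key l₁ (Or.inl ⟨ha, hb⟩))
      · exact Or.inl (key l₁ (Or.inr (Or.inl ⟨ha, hx⟩)))
      · exact Or.inr (key l₂ (Or.inr (Or.inr ⟨hb, hx⟩)))
      · exact Or.inl (key l₁ (Or.inr (Or.inr ⟨hb, hx⟩)))
      · exact Or.inr (key l₂ (Or.inr (Or.inl ⟨ha, hx⟩)))
      · exact Or.inr (key l₂ (Or.inl ⟨ha, hb⟩))
      · exact Or.inr (key l₂ (Or.inl ⟨ha, hb⟩))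

variable {φ : List (List (Fin n × Bool))}

lemma med_mem (h2 : ∀ c ∈ φ, c.length ≤ 2) {a b x : Fin n → Bool}
    (ha : ∀ c ∈ φ, SatClause a c) (hb : ∀ c ∈ φ, SatClause b c)
    (hx : ∀ c ∈ φ, SatClause x c) :
    ∀ c ∈ φ, SatClause (med a b x) c :=
  fun c hc => med_sat (h2 c hc) (ha c hc) (hb c hc) (hx c hc)

lemma lax_med (h2 : ∀ c ∈ φ, c.length ≤ 2) {a b : Fin n → Bool}
    (ha : ∀ c ∈ φ, SatClause a c) (hb : ∀ c ∈ φ, SatClause b c)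
    {k : ℕ} {x y : Fin n → Bool}
    (h : Lax {v | ∀ c ∈ φ, SatClause v c} k x y) :
    Lax {v | ∀ c ∈ φ, SatClause v c} k (med a b x) (med a b y) := by
  induction h with
  | refl x hx => exact Lax.refl _ (med_mem h2 ha hb hx)
  | head hx hd _ ih =>
      exact Lax.head (med_mem h2 ha hb hx) (le_trans (dist_med_le a b _ _) hd) ih

/-- distance one: there is a unique differing coordinate -/
lemma dist_one {x y : Fin n → Bool} (h : hammingDist x y = 1) :
    ∃ i, x i ≠ y i ∧ ∀ j, j ≠ i → x j = y j := by
  rw [hammingDist, Finset.card_eq_one] at h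
  obtain ⟨i, hi⟩ := h
  refine ⟨i, ?_, ?_⟩
  · have : i ∈ ({i} : Finset (Fin n)) := Finset.mem_singleton_self i
    rw [← hi] at this
    simpa using this
  · intro j hj
    by_contra hne
    have : j ∈ ({i} : Finset (Fin n)) := by
      rw [← hi]; simp [hne]
    simp [hj] at this

lemma dist_decrease {a b w : Fin n → Bool} {i : Fin n}
    (hi : a i ≠ w i) (hrest : ∀ j, j ≠ i → a j = w j) (hib : a i ≠ b i) :
    hammingDist w b + 1 = hammingDist a b := by
  have hD : ({j | w j ≠ b j} : Finset (Fin n)) = ({j | a j ≠ b j} : Finset (Fin n)).erase i := by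
    ext j
    simp only [Finset.mem_filter, Finset.mem_univ, true_and, Finset.mem_erase]
    by_cases hj : j = i
    · subst hj
      have : w j = b j := by
        revert hi hib; cases a j <;> cases w j <;> cases b j <;> simp
      simp [this]
    · rw [hrest j hj]
      simp [hj]
  have hiD : i ∈ ({j | a j ≠ b j} : Finset (Fin n)) := by simpa using hib
  unfold hammingDist
  rw [hD, Finset.card_erase_of_mem hiD]
  have := Finset.card_pos.mpr ⟨i, hiD⟩
  omega

lemma med_eq_start {a b w : Fin n → Bool} {i : Fin n}
    (hrest : ∀ j, j ≠ i → a j = w j) (hib : a i = b i) :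
    med a b w = a := by
  funext j
  unfold med
  split
  · rfl
  · next hne =>
      have hj : j ≠ i := fun h => hne (h ▸ hib)
      exact (hrest j hj).symm

/-- Main lemma: a lax walk of any length yields a geodesic walk. -/
lemma main (h2 : ∀ c ∈ φ, c.length ≤ 2) : ∀ k : ℕ, ∀ a b : Fin n → Bool,
    Lax {v | ∀ c ∈ φ, SatClause v c} k a b →
    Steps {v | ∀ c ∈ φ, SatClause v c} (hammingDist a b) a b := by
  intro k
  induction k with
  | zero =>
      intro a b h
      cases h with
      | refl a ha => rw [hammingDist_self]; exact Steps.refl a ha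
  | succ k ih =>
      intro a b h
      cases h with
      | @head _ _ w _ ha hd hw =>
        rcases Nat.le_one_iff_eq_zero_or_eq_one.mp hd with h0 | h1
        · rw [hammingDist_eq_zero] at h0
          subst h0
          exact ih a b hw
        · obtain ⟨i, hi, hrest⟩ := dist_one h1
          by_cases hib : a i = b i
          · -- step away: medianize the rest of the walk
            have hb := hw.end_mem
            have hmed := lax_med h2 ha hb hw
            rw [med_eq_start hrest hib, med_right] at hmed
            exact ih a b hmed
          · -- step toward b
            have hstep := ih w b hw
            have hdec := dist_decrease hi hrest hib
            rw [← hdec]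
            exact steps_head hstep a ha h1

end TwoCnfAux

theorem two_cnf_distances_do_not_expand (n : ℕ)
    (φ : List (List (Fin n × Bool)))
    (h2CNF : ∀ c ∈ φ, c.length ≤ 2)
    (a b : Fin n → Bool) :
    let S : Set (Fin n → Bool) := {x | ∀ c ∈ φ, SatClause x c}
    a ∈ S → b ∈ S → (∃ k, Steps S k a b) →
      IsLeast {k | Steps S k a b} (hammingDist a b) := by
  intro S ha hb hex
  obtain ⟨k, hk⟩ := hex
  constructor
  · exact TwoCnfAux.main h2CNF k a b (TwoCnfAux.steps_to_lax hk)
  · intro m hm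
    exact TwoCnfAux.steps_le hm
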